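/- Let G be a simple graph with n̄ vertices (n̄ ≥ 2) and m̄ edges, and with maximum degree Δ. Let 0 < q ≤ 1 be a real number and suppose that Δ ≤ m̄·q/(20·log₂ n̄) and q²·m̄ ≥ 400·(log₂ n̄)². Form a random vertex subset S by letting each vertex join S independently with probability q. Then with probability at least 1 − 10·(log₂ n̄)/n̄⁵, the number of edges of G having both endpoints in S is at most 6·q²·m̄. -/

import Mathlib

open MeasureTheory

namespace Stmt0Aux

open Finset

variable {V : Type*} [Fintype V] [DecidableEq V]

/-- weight of an outcome -/
def w (q : ℝ) (f : V → Bool) : ℝ := ∏ v : V, (if f v then q else 1 - q)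

lemma w_nonneg {q : ℝ} (h0 : 0 ≤ q) (h1 : q ≤ 1) (f : V → Bool) : 0 ≤ w q f :=
  Finset.prod_nonneg fun v _ => by by_cases h : f v <;> simp [w, h, h0, sub_nonneg.2 h1]

lemma sum_w_boole {q : ℝ} (U : Finset V) :
    ∑ f : V → Bool, w q f * (if ∀ v ∈ U, f v = true then 1 else 0) = q ^ U.card := by
  have key : ∀ f : V → Bool,
      w q f * (if ∀ v ∈ U, f v = true then 1 else 0)
        = ∏ v : V, ((if f v then q else 1 - q) * (if v ∈ U then (if f v then 1 else 0) else 1)) := by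
    intro f
    rw [Finset.prod_mul_distrib]
    congr 1
    rw [Finset.prod_ite_mem Finset.univ U (fun v => if f v then (1:ℝ) else 0)]
    rw [Finset.univ_inter, Finset.prod_boole]
    simp
  simp_rw [key]
  have expand := Finset.prod_univ_sum (fun _ : V => (Finset.univ : Finset Bool))
    (fun v b => (if b then q else 1 - q) * (if v ∈ U then (if b then (1:ℝ) else 0) else 1))
  rw [Fintype.piFinset_univ] at expand
  rw [← expand]
  have : ∀ v : V, (∑ b : Bool, (if b then q else 1 - q) * (if v ∈ U then (if b then (1:ℝ) else 0) else 1))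
      = (if v ∈ U then q else 1) := by
    intro v
    rw [Fintype.sum_bool]
    by_cases h : v ∈ U <;> simp [h]
  simp_rw [this]
  rw [Finset.prod_ite_mem Finset.univ U (fun _ => q), Finset.univ_inter, Finset.prod_const]

lemma sum_w_one {q : ℝ} : ∑ f : V → Bool, w q f = (1 : ℝ) := by
  have := sum_w_boole (q := q) (V := V) ∅
  simpa using this

lemma measure_coe_finset {q : ℝ} (h0 : 0 ≤ q) (h1 : q ≤ 1) (h : Real.toNNReal q ≤ 1)
    (s : Finset (V → Bool)) :
    Measure.pi (fun _ : V => (PMF.bernoulli (Real.toNNReal q) h).toMeasure) ↑s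
      = ENNReal.ofReal (∑ f ∈ s, w q f) := by
  set μ := Measure.pi (fun _ : V => (PMF.bernoulli (Real.toNNReal q) h).toMeasure) with hμ
  have hsingle : ∀ f : V → Bool, μ {f} = ENNReal.ofReal (w q f) := by
    intro f
    have : ({f} : Set (V → Bool)) = Set.pi Set.univ (fun v => {f v}) :=
      (Set.univ_pi_singleton f).symm
    rw [this, hμ, Measure.pi_pi]
    have hfac : ∀ v : V, (PMF.bernoulli (Real.toNNReal q) h).toMeasure {f v}
        = ENNReal.ofReal (if f v then q else 1 - q) := by
      intro v
      rw [PMF.toMeasure_apply_singleton _ _ (measurableSet_singleton _)]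
      rw [PMF.bernoulli_apply]
      cases hb : f v
      · simp only [Bool.cond_false]
        simp only [Bool.false_eq_true, if_false]
        rw [ENNReal.coe_sub, ENNReal.coe_one, ENNReal.ofReal_sub _ h0, ENNReal.ofReal_one]
        rfl
      · simp only [Bool.cond_true]; rfl
    simp_rw [hfac]
    rw [← ENNReal.ofReal_prod_of_nonneg]
    · rfl
    · intro v _
      by_cases hb : f v <;> simp [hb, h0, sub_nonneg.2 h1]
  have hdecomp : (↑s : Set (V → Bool)) = ⋃ f ∈ s, ({f} : Set (V → Bool)) := by
    ext g
    simp only [Set.mem_iUnion, Set.mem_singleton_iff, Finset.mem_coe]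
    constructor
    · intro hg; exact ⟨g, hg, rfl⟩
    · rintro ⟨f, hf, rfl⟩; exact hf
  rw [hdecomp, measure_biUnion_finset]
  · simp_rw [hsingle]
    rw [← ENNReal.ofReal_sum_of_nonneg]
    intro f _
    exact w_nonneg h0 h1 f
  · intro a _ b _ hab
    simp [Function.onFun, Set.disjoint_singleton, hab]
  · intro f _
    exact MeasurableSet.of_discrete

/-- endpoints of a `Sym2` as a Finset -/
def VS (e : Sym2 V) : Finset V := Finset.univ.filter (· ∈ e)

/-- union of endpoints of a tuple of edges -/
def UU {k : ℕ} (t : Fin k → Sym2 V) : Finset V :=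
  Finset.univ.filter (fun v => ∃ i, v ∈ t i)

lemma VS_mk (x y : V) : VS s(x, y) = {x, y} := by
  ext v; simp [VS, Sym2.mem_iff]

lemma card_VS_le (e : Sym2 V) : (VS e).card ≤ 2 := by
  induction e with
  | _ x y =>
    rw [VS_mk]
    exact (Finset.card_insert_le _ _).trans (by simp)

lemma card_VS_of_not_isDiag (e : Sym2 V) (he : ¬ e.IsDiag) : (VS e).card = 2 := by
  induction e with
  | _ x y =>
    rw [Sym2.mk_isDiag_iff] at he
    rw [VS_mk, Finset.card_insert_of_notMem (by simp [he]), Finset.card_singleton]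

lemma card_UU_le {k : ℕ} (t : Fin k → Sym2 V) : (UU t).card ≤ 2 * k := by
  have hsub : UU t ⊆ Finset.univ.biUnion (fun i : Fin k => VS (t i)) := by
    intro v hv
    rw [UU, Finset.mem_filter] at hv
    obtain ⟨-, i, hi⟩ := hv
    exact Finset.mem_biUnion.2 ⟨i, Finset.mem_univ _, by simp [VS, hi]⟩
  calc (UU t).card ≤ _ := Finset.card_le_card hsub
    _ ≤ ∑ i : Fin k, (VS (t i)).card := Finset.card_biUnion_le
    _ ≤ ∑ _i : Fin k, 2 := Finset.sum_le_sum fun i _ => card_VS_le _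
    _ = 2 * k := by simp [mul_comm]

lemma UU_cons {k : ℕ} (e : Sym2 V) (t : Fin k → Sym2 V) :
    UU (Fin.cons e t) = VS e ∪ UU t := by
  ext v
  simp only [UU, VS, Finset.mem_filter, Finset.mem_union, Finset.mem_univ, true_and,
    Fin.exists_fin_succ, Fin.cons_zero, Fin.cons_succ]

lemma sum_piFinset_succ {α β : Type*} [DecidableEq α] [AddCommMonoid β] (s : Finset α) (k : ℕ)
    (F : (Fin (k + 1) → α) → β) :
    ∑ t ∈ Fintype.piFinset (fun _ : Fin (k + 1) => s), F t
      = ∑ e ∈ s, ∑ t ∈ Fintype.piFinset (fun _ : Fin k => s), F (Fin.cons e t) := by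
  rw [← Finset.sum_product']
  refine Finset.sum_nbij' (fun t => (t 0, Fin.tail t)) (fun p => Fin.cons p.1 p.2) ?_ ?_ ?_ ?_ ?_
  · intro t ht
    rw [Fintype.mem_piFinset] at ht
    exact Finset.mem_product.2 ⟨ht 0, Fintype.mem_piFinset.2 fun i => ht _⟩
  · intro p hp
    rw [Finset.mem_product] at hp
    exact Fintype.mem_piFinset.2 fun i => Fin.cases hp.1 (fun j => Fintype.mem_piFinset.1 hp.2 j) i
  · intro t _; exact Fin.cons_self_tail t
  · intro p _; simp
  · intro t _; rw [Fin.cons_self_tail]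

lemma moment_eq (q : ℝ) (G : SimpleGraph V) [DecidableRel G.Adj] (k : ℕ) :
    ∑ f : V → Bool, w q f *
        (((G.edgeFinset ∩ (Finset.univ.filter (fun v => f v = true)).sym2).card : ℝ)) ^ k
      = ∑ t ∈ Fintype.piFinset (fun _ : Fin k => G.edgeFinset), q ^ (UU t).card := by
  have hX : ∀ f : V → Bool,
      ((G.edgeFinset ∩ (Finset.univ.filter (fun v => f v = true)).sym2).card : ℝ)
        = ∑ e ∈ G.edgeFinset,
            (if e ∈ (Finset.univ.filter (fun v => f v = true)).sym2 then (1:ℝ) else 0) := by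
    intro f
    rw [Finset.sum_boole, Finset.filter_mem_eq_inter]
  simp_rw [hX, Finset.sum_pow', Finset.mul_sum]
  rw [Finset.sum_comm]
  refine Finset.sum_congr rfl fun t ht => ?_
  have hprod : ∀ f : V → Bool,
      (∏ i : Fin k, (if t i ∈ (Finset.univ.filter (fun v => f v = true)).sym2 then (1:ℝ) else 0))
        = (if ∀ v ∈ UU t, f v = true then 1 else 0) := by
    intro f
    rw [Fintype.prod_boole]
    congr 1
    apply propext
    constructor
    · intro hall v hv
      rw [UU, Finset.mem_filter] at hv
      obtain ⟨-, i, hi⟩ := hv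
      have := Finset.mem_sym2_iff.1 (hall i) v hi
      exact (Finset.mem_filter.1 this).2
    · intro hall i
      rw [Finset.mem_sym2_iff]
      intro a ha
      refine Finset.mem_filter.2 ⟨Finset.mem_univ _, ?_⟩
      exact hall a (Finset.mem_filter.2 ⟨Finset.mem_univ _, ⟨i, ha⟩⟩)
  simp_rw [hprod]
  exact sum_w_boole (UU t)

lemma pointwise_bound {q : ℝ} (hq0 : 0 ≤ q) (hq1 : q ≤ 1)
    (G : SimpleGraph V) [DecidableRel G.Adj] (A : Finset V)
    {e : Sym2 V} (he : e ∈ G.edgeFinset) :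
    q ^ (VS e \ A).card
      ≤ q ^ 2 + (if ∃ v ∈ A, v ∈ e then q else 0) + (if ∀ v ∈ e, v ∈ A then (1:ℝ) else 0) := by
  have hq2 : (0:ℝ) ≤ q ^ 2 := by positivity
  by_cases h2 : ∀ v ∈ e, v ∈ A
  · have : VS e \ A = ∅ := by
      rw [Finset.sdiff_eq_empty_iff_subset]
      intro v hv
      exact h2 v ((Finset.mem_filter.1 hv).2)
    rw [this, if_pos h2]
    have : (0:ℝ) ≤ (if ∃ v ∈ A, v ∈ e then q else 0) := by positivity
    simp only [Finset.card_empty, pow_zero]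
    linarith
  · by_cases h1 : ∃ v ∈ A, v ∈ e
    · have hcard : 1 ≤ (VS e \ A).card := by
        push_neg at h2
        obtain ⟨v, hv, hvA⟩ := h2
        exact Finset.card_pos.2 ⟨v, Finset.mem_sdiff.2 ⟨Finset.mem_filter.2 ⟨Finset.mem_univ _, hv⟩, hvA⟩⟩
      have : q ^ (VS e \ A).card ≤ q ^ 1 := pow_le_pow_of_le_one hq0 hq1 hcard
      rw [if_pos h1, if_neg h2]
      simpa using this.trans (by linarith [hq2] : q ^ 1 ≤ q ^ 2 + q + 0)
    · have hdiag : ¬ e.IsDiag := SimpleGraph.not_isDiag_of_mem_edgeFinset he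
      have hVA : VS e \ A = VS e := by
        rw [Finset.sdiff_eq_self_iff_disjoint]
        rw [Finset.disjoint_left]
        intro v hv hvA
        exact h1 ⟨v, hvA, (Finset.mem_filter.1 hv).2⟩
      rw [hVA, card_VS_of_not_isDiag e hdiag, if_neg h1, if_neg h2]
      linarith

lemma inner_sum_bound {q : ℝ} (hq0 : 0 ≤ q) (hq1 : q ≤ 1)
    (G : SimpleGraph V) [DecidableRel G.Adj] (A : Finset V) (K Δ : ℕ)
    (hA : A.card ≤ 2 * K) (hdeg : ∀ v, G.degree v ≤ Δ) :
    ∑ e ∈ G.edgeFinset, q ^ (VS e \ A).card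
      ≤ q ^ 2 * G.edgeFinset.card + q * ((2 * K) * Δ) + ((2 * K) * (2 * K + 1)) := by
  have step1 : ∑ e ∈ G.edgeFinset, q ^ (VS e \ A).card
      ≤ ∑ e ∈ G.edgeFinset, (q ^ 2 + (if ∃ v ∈ A, v ∈ e then q else 0)
          + (if ∀ v ∈ e, v ∈ A then (1:ℝ) else 0)) :=
    Finset.sum_le_sum fun e he => pointwise_bound hq0 hq1 G A he
  rw [Finset.sum_add_distrib, Finset.sum_add_distrib, Finset.sum_const] at step1
  have hc1 : ((G.edgeFinset.filter (fun e => ∃ v ∈ A, v ∈ e)).card : ℝ) ≤ (2 * K) * Δ := by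
    have hsub : G.edgeFinset.filter (fun e => ∃ v ∈ A, v ∈ e)
        ⊆ A.biUnion (fun v => G.incidenceFinset v) := by
      intro e he
      rw [Finset.mem_filter] at he
      obtain ⟨heE, v, hvA, hve⟩ := he
      refine Finset.mem_biUnion.2 ⟨v, hvA, ?_⟩
      rw [SimpleGraph.mem_incidenceFinset]
      exact ⟨SimpleGraph.mem_edgeFinset.1 heE, hve⟩
    have : (G.edgeFinset.filter (fun e => ∃ v ∈ A, v ∈ e)).card ≤ (2 * K) * Δ := by
      calc _ ≤ (A.biUnion (fun v => G.incidenceFinset v)).card := Finset.card_le_card hsub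
        _ ≤ ∑ v ∈ A, (G.incidenceFinset v).card := Finset.card_biUnion_le
        _ ≤ ∑ _v ∈ A, Δ := Finset.sum_le_sum fun v _ => by
            rw [SimpleGraph.card_incidenceFinset_eq_degree]; exact hdeg v
        _ = A.card * Δ := by rw [Finset.sum_const, smul_eq_mul]
        _ ≤ (2 * K) * Δ := Nat.mul_le_mul_right _ hA
    exact_mod_cast this
  have hc2 : ((G.edgeFinset.filter (fun e => ∀ v ∈ e, v ∈ A)).card : ℝ)
      ≤ (2 * K) * (2 * K + 1) := by
    have hsub : G.edgeFinset.filter (fun e => ∀ v ∈ e, v ∈ A) ⊆ A.sym2 := by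
      intro e he
      rw [Finset.mem_filter] at he
      exact Finset.mem_sym2_iff.2 he.2
    have : (G.edgeFinset.filter (fun e => ∀ v ∈ e, v ∈ A)).card ≤ (2 * K) * (2 * K + 1) := by
      calc _ ≤ A.sym2.card := Finset.card_le_card hsub
        _ = Nat.choose (A.card + 1) 2 := Finset.card_sym2 A
        _ ≤ Nat.choose (2 * K + 1) 2 := Nat.choose_le_choose 2 (by omega)
        _ = (2 * K + 1) * (2 * K) / 2 := by rw [Nat.choose_two_right, Nat.add_sub_cancel]
        _ ≤ (2 * K) * (2 * K + 1) := by
            rw [mul_comm (2 * K + 1)]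
            exact Nat.div_le_self _ _
    exact_mod_cast this
  have hq_ite : ∑ e ∈ G.edgeFinset, (if ∃ v ∈ A, v ∈ e then q else 0)
      = q * ((G.edgeFinset.filter (fun e => ∃ v ∈ A, v ∈ e)).card : ℝ) := by
    rw [Finset.sum_ite, Finset.sum_const, Finset.sum_const]
    simp [mul_comm]
  have h1_ite : ∑ e ∈ G.edgeFinset, (if ∀ v ∈ e, v ∈ A then (1:ℝ) else 0)
      = ((G.edgeFinset.filter (fun e => ∀ v ∈ e, v ∈ A)).card : ℝ) := by
    rw [Finset.sum_ite, Finset.sum_const, Finset.sum_const]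
    simp
  rw [hq_ite, h1_ite] at step1
  calc ∑ e ∈ G.edgeFinset, q ^ (VS e \ A).card ≤ _ := step1
    _ ≤ q ^ 2 * G.edgeFinset.card + q * ((2 * K) * Δ) + ((2 * K) * (2 * K + 1)) := by
        rw [nsmul_eq_mul]
        have := mul_le_mul_of_nonneg_left hc1 hq0
        push_cast at this hc2 ⊢
        nlinarith

lemma count_le {q : ℝ} (hq0 : 0 ≤ q) (hq1 : q ≤ 1)
    (G : SimpleGraph V) [DecidableRel G.Adj] (K Δ : ℕ)
    (hdeg : ∀ v, G.degree v ≤ Δ) :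
    ∀ k, k ≤ K →
      ∑ t ∈ Fintype.piFinset (fun _ : Fin k => G.edgeFinset), q ^ (UU t).card
        ≤ (q ^ 2 * G.edgeFinset.card + q * ((2 * K) * Δ) + ((2 * K) * (2 * K + 1))) ^ k := by
  set B : ℝ := q ^ 2 * G.edgeFinset.card + q * ((2 * K) * Δ) + ((2 * K) * (2 * K + 1)) with hB
  intro k
  induction k with
  | zero => intro _; simp [UU]
  | succ k ih =>
    intro hk1
    have hkK : k ≤ K := Nat.le_of_succ_le hk1
    rw [sum_piFinset_succ, Finset.sum_comm]
    have hterm : ∀ t ∈ Fintype.piFinset (fun _ : Fin k => G.edgeFinset),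
        ∑ e ∈ G.edgeFinset, q ^ (UU (Fin.cons e t)).card ≤ q ^ (UU t).card * B := by
      intro t _
      have hcard : ∀ e : Sym2 V,
          (UU (Fin.cons e t)).card = (UU t).card + (VS e \ UU t).card := by
        intro e
        rw [UU_cons, Finset.union_comm, ← Finset.union_sdiff_self_eq_union,
          Finset.card_union_of_disjoint Finset.disjoint_sdiff]
      calc ∑ e ∈ G.edgeFinset, q ^ (UU (Fin.cons e t)).card
          = q ^ (UU t).card * ∑ e ∈ G.edgeFinset, q ^ (VS e \ UU t).card := by
            rw [Finset.mul_sum]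
            exact Finset.sum_congr rfl fun e _ => by rw [hcard e, pow_add]
        _ ≤ q ^ (UU t).card * B := by
            refine mul_le_mul_of_nonneg_left ?_ (by positivity)
            exact inner_sum_bound hq0 hq1 G (UU t) K Δ
              ((card_UU_le t).trans (by omega)) hdeg
    have hBnn : (0:ℝ) ≤ B := by
      rw [hB]; positivity
    calc _ ≤ ∑ t ∈ Fintype.piFinset (fun _ : Fin k => G.edgeFinset), q ^ (UU t).card * B :=
          Finset.sum_le_sum hterm
      _ = (∑ t ∈ Fintype.piFinset (fun _ : Fin k => G.edgeFinset), q ^ (UU t).card) * B := by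
          rw [Finset.sum_mul]
      _ ≤ B ^ k * B := mul_le_mul_of_nonneg_right (ih hkK) hBnn
      _ = B ^ (k + 1) := by rw [pow_succ]

end Stmt0Aux

set_option maxHeartbeats 1000000 in
/-- Random-subset edge-count concentration (Lemma 4.2 of Chang et al.):
if each vertex joins `S` independently with probability `q`, where
`Δ ≤ m·q/(20 log₂ n)` and `q²·m ≥ 400 (log₂ n)²`, then with probability at
least `1 - 10 log₂ n / n⁵` the number of edges induced by `S` is at most
`6 q² m`. -/
theorem stmt0 {V : Type*} [Fintype V] [DecidableEq V]
    (G : SimpleGraph V) [DecidableRel G.Adj]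
    (n m Δ : ℕ) (hn : 2 ≤ n) (hV : Fintype.card V = n)
    (hm : G.edgeFinset.card = m) (hΔ : G.maxDegree = Δ)
    (q : ℝ) (hq0 : 0 < q) (hq1 : q ≤ 1)
    (hΔq : (Δ : ℝ) ≤ m * q / (20 * Real.logb 2 n))
    (hmq : 400 * (Real.logb 2 n) ^ 2 ≤ q ^ 2 * m) :
    1 - 10 * Real.logb 2 n / (n : ℝ) ^ 5 ≤
      (Measure.pi (fun _ : V =>
          (PMF.bernoulli (Real.toNNReal q) (Real.toNNReal_le_one.mpr hq1)).toMeasure)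
        {f : V → Bool |
          (((G.edgeFinset ∩ (Finset.univ.filter (fun v => f v = true)).sym2).card : ℝ))
            ≤ 6 * q ^ 2 * m}).toReal := by
  classical
  open Stmt0Aux in
  set L : ℝ := Real.logb 2 n with hL
  have hn0 : (0:ℝ) < n := by positivity
  have hL1 : 1 ≤ L := by
    rw [hL, ← Real.logb_self_eq_one (b := 2) (by norm_num)]
    exact Real.logb_le_logb_of_le (by norm_num) (by norm_num) (by exact_mod_cast hn)
  have hq0' : (0:ℝ) ≤ q := hq0.le
  -- m is positive
  have hqm_pos : (0:ℝ) < q ^ 2 * m := by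
    have : (0:ℝ) < 400 * L ^ 2 := by positivity
    linarith [hmq]
  set K : ℕ := ⌈5 * L⌉₊ with hK
  have hKge : 5 * L ≤ (K : ℝ) := Nat.le_ceil _
  have hKle : (K : ℝ) ≤ 6 * L := by
    have := Nat.ceil_lt_add_one (show (0:ℝ) ≤ 5 * L by linarith)
    rw [← hK] at this
    linarith
  -- basic quantities
  set T : ℝ := 6 * q ^ 2 * m with hT
  have hTpos : 0 < T := by rw [hT]; linarith
  set X : (V → Bool) → ℝ := fun f =>
    ((G.edgeFinset ∩ (Finset.univ.filter (fun v => f v = true)).sym2).card : ℝ) with hX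
  have hXnn : ∀ f, 0 ≤ X f := fun f => Nat.cast_nonneg _
  set bad : Finset (V → Bool) := Finset.univ.filter (fun f => ¬ (X f ≤ T)) with hbad
  set good : Finset (V → Bool) := Finset.univ.filter (fun f => X f ≤ T) with hgood
  have hdeg : ∀ v, G.degree v ≤ Δ := fun v => hΔ ▸ G.degree_le_maxDegree v
  -- the moment bound
  set B : ℝ := q ^ 2 * G.edgeFinset.card + q * ((2 * K) * Δ) + ((2 * K) * (2 * K + 1)) with hB
  have hBnn : (0:ℝ) ≤ B := by rw [hB]; positivity
  have hmoment : ∑ f : V → Bool, w q f * X f ^ K ≤ B ^ K := by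
    rw [hX]
    rw [moment_eq q G K]
    exact count_le hq0' hq1 G K Δ hdeg K le_rfl
  -- B is at most 2 q² m
  have hB2 : B ≤ 2 * (q ^ 2 * m) := by
    have hΔ' : (Δ : ℝ) * (20 * L) ≤ m * q := by
      have h20L : (0:ℝ) < 20 * L := by linarith
      calc (Δ : ℝ) * (20 * L) ≤ (m * q / (20 * L)) * (20 * L) := by
            exact mul_le_mul_of_nonneg_right hΔq h20L.le
        _ = m * q := by field_simp
    have hmid : q * ((2 * (K:ℝ)) * Δ) ≤ (6/10) * (q ^ 2 * m) := by
      have h1 : q * ((2 * (K:ℝ)) * Δ) ≤ q * ((2 * (6 * L)) * Δ) := by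
        have : (2 * (K:ℝ)) * Δ ≤ (2 * (6 * L)) * Δ := by
          apply mul_le_mul_of_nonneg_right _ (Nat.cast_nonneg Δ)
          linarith
        exact mul_le_mul_of_nonneg_left this hq0'
      have hmm : q * ((Δ:ℝ) * (20 * L)) ≤ q * ((m:ℝ) * q) :=
        mul_le_mul_of_nonneg_left hΔ' hq0'
      calc q * ((2 * (K:ℝ)) * Δ) ≤ q * ((2 * (6 * L)) * Δ) := h1
        _ = (12 / 20) * (q * ((Δ:ℝ) * (20 * L))) := by ring
        _ ≤ (12 / 20) * (q * ((m:ℝ) * q)) := by linarith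
        _ = (6/10) * (q ^ 2 * m) := by ring
    have hlast : ((2 * (K:ℝ)) * (2 * K + 1)) ≤ (4/10) * (q ^ 2 * m) := by
      have h1 : (2 * (K:ℝ)) * (2 * K + 1) ≤ (12 * L) * (13 * L) := by
        have hK2 : 2 * (K:ℝ) ≤ 12 * L := by linarith
        have hK3 : 2 * (K:ℝ) + 1 ≤ 13 * L := by linarith
        have : (0:ℝ) ≤ 2 * (K:ℝ) := by positivity
        nlinarith
      have h2 : (12 * L) * (13 * L) = 156 * L ^ 2 := by ring
      have h3 : 400 * L ^ 2 ≤ q ^ 2 * m := hmq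
      nlinarith
    rw [hB, hm]
    push_cast
    push_cast at hmid hlast
    nlinarith
  -- Markov
  have hwnn : ∀ f : V → Bool, 0 ≤ w q f := fun f => w_nonneg hq0' hq1 f
  have hmarkov : (∑ f ∈ bad, w q f) * T ^ K ≤ B ^ K := by
    calc (∑ f ∈ bad, w q f) * T ^ K = ∑ f ∈ bad, w q f * T ^ K := by rw [Finset.sum_mul]
      _ ≤ ∑ f ∈ bad, w q f * X f ^ K := by
          refine Finset.sum_le_sum fun f hf => ?_
          have hXf : T ≤ X f := by
            rw [hbad, Finset.mem_filter] at hf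
            exact (not_le.1 hf.2).le
          exact mul_le_mul_of_nonneg_left (pow_le_pow_left₀ hTpos.le hXf K) (hwnn f)
      _ ≤ ∑ f : V → Bool, w q f * X f ^ K := by
          refine Finset.sum_le_sum_of_subset_of_nonneg (Finset.filter_subset _ _) ?_
          intro f _ _
          exact mul_nonneg (hwnn f) (pow_nonneg (hXnn f) K)
      _ ≤ B ^ K := hmoment
  have hbad_le : ∑ f ∈ bad, w q f ≤ 1 / 3 ^ K := by
    have hTK : T ^ K = 3 ^ K * (2 * (q ^ 2 * m)) ^ K := by
      rw [hT, ← mul_pow]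
      congr 1
      ring
    have hP : (0:ℝ) < (2 * (q ^ 2 * m)) ^ K := by positivity
    have hBK : B ^ K ≤ (2 * (q ^ 2 * m)) ^ K := pow_le_pow_left₀ hBnn hB2 K
    have hST : (∑ f ∈ bad, w q f) * (3 ^ K * (2 * (q ^ 2 * m)) ^ K)
        ≤ (2 * (q ^ 2 * m)) ^ K := by
      rw [← hTK]; exact hmarkov.trans hBK
    have hkey : ((∑ f ∈ bad, w q f) * 3 ^ K) * (2 * (q ^ 2 * m)) ^ K
        ≤ 1 * (2 * (q ^ 2 * m)) ^ K := by
      calc ((∑ f ∈ bad, w q f) * 3 ^ K) * (2 * (q ^ 2 * m)) ^ K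
          = (∑ f ∈ bad, w q f) * (3 ^ K * (2 * (q ^ 2 * m)) ^ K) := by ring
        _ ≤ (2 * (q ^ 2 * m)) ^ K := hST
        _ = 1 * (2 * (q ^ 2 * m)) ^ K := (one_mul _).symm
    have hkey2 := le_of_mul_le_mul_right hkey hP
    rw [le_div_iff₀ (by positivity : (0:ℝ) < (3:ℝ) ^ K)]
    exact hkey2
  -- numeric bound
  have hfinal : 1 / (3:ℝ) ^ K ≤ 10 * L / (n : ℝ) ^ 5 := by
    have hn5 : ((n:ℝ)) ^ 5 ≤ (3:ℝ) ^ K := by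
      have h2L : (2:ℝ) ^ L = n := Real.rpow_logb (by norm_num) (by norm_num) hn0
      have e1 : ((n:ℝ)) ^ (5:ℕ) = (2:ℝ) ^ (L * 5) := by
        rw [← h2L, ← Real.rpow_natCast ((2:ℝ) ^ L) 5, ← Real.rpow_mul (by norm_num)]
        norm_num
      have e2 : (2:ℝ) ^ (L * 5) ≤ (3:ℝ) ^ (L * 5) := by
        apply Real.rpow_le_rpow (by norm_num) (by norm_num)
        nlinarith
      have e3 : (3:ℝ) ^ (L * 5) ≤ (3:ℝ) ^ ((K:ℝ)) := by
        apply Real.rpow_le_rpow_of_exponent_le (by norm_num)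
        linarith
      have e4 : (3:ℝ) ^ ((K:ℝ)) = (3:ℝ) ^ K := Real.rpow_natCast 3 K
      calc ((n:ℝ)) ^ 5 = (2:ℝ) ^ (L * 5) := e1
        _ ≤ (3:ℝ) ^ (L * 5) := e2
        _ ≤ (3:ℝ) ^ ((K:ℝ)) := e3
        _ = (3:ℝ) ^ K := e4
    have hn5pos : (0:ℝ) < (n:ℝ) ^ 5 := by positivity
    calc 1 / (3:ℝ) ^ K ≤ 1 / (n:ℝ) ^ 5 := by
          apply one_div_le_one_div_of_le hn5pos hn5
      _ ≤ 10 * L / (n:ℝ) ^ 5 := (div_le_div_iff_of_pos_right hn5pos).2 (by linarith)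
  -- assemble
  have hset : {f : V → Bool |
      (((G.edgeFinset ∩ (Finset.univ.filter (fun v => f v = true)).sym2).card : ℝ))
        ≤ 6 * q ^ 2 * m} = (↑good : Set (V → Bool)) := by
    ext f
    simp only [Set.mem_setOf_eq, hgood, Finset.coe_filter, Finset.mem_univ, true_and]
    exact Iff.rfl
  rw [hset, measure_coe_finset hq0' hq1 _ good,
    ENNReal.toReal_ofReal (Finset.sum_nonneg fun f _ => hwnn f)]
  have hsplit : (∑ f ∈ good, w q f) + (∑ f ∈ bad, w q f) = 1 := by
    rw [hgood, hbad, Finset.sum_filter_add_sum_filter_not]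
    exact sum_w_one
  have := hbad_le.trans hfinal
  linarith
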